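/- Let q be a positive integer, f : ℝ → [0,∞) measurable, and β = (β₁,…,β_q) ∈ ℝ^q. Then ∫_{ℝ^q} f(y₁+⋯+y_q) ∏_{i=1}^q |y_i|^{β_i} dy₁⋯dy_q = Γ · ∫_ℝ f(s) |s|^{q-1+β₁+⋯+β_q} ds, where Γ = ∏_{i=2}^q ∫_ℝ |t|^{q-i+B_i} |1-t|^{β_{i-1}} dt with B_i = β_i + ⋯ + β_q (with the convention ∞·0 = 0 when Γ is infinite). -/

import Mathlib

open MeasureTheory Real ENNReal

lemma scale_int (u β c : ℝ) (hu0 : u ≠ 0) :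
    ∫⁻ s : ℝ, ENNReal.ofReal (|u - s| ^ β * |s| ^ c)
      = (∫⁻ t : ℝ, ENNReal.ofReal (|t| ^ c * |1 - t| ^ β))
        * ENNReal.ofReal (|u| ^ (c + β + 1)) := by
  have habs : (0:ℝ) < |u| := abs_pos.2 hu0
  have hmap : Measure.map (fun t : ℝ => u * t) volume = ENNReal.ofReal |u⁻¹| • volume :=
    Real.map_volume_mul_left hu0
  have h1 : ∫⁻ s : ℝ, ENNReal.ofReal (|u - s| ^ β * |s| ^ c)
      = ∫⁻ s : ℝ, ENNReal.ofReal (|u - s| ^ β * |s| ^ c)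
          ∂(ENNReal.ofReal |u| • Measure.map (fun t : ℝ => u * t) volume) := by
    rw [hmap, smul_smul, ← ENNReal.ofReal_mul (abs_nonneg _), ← abs_mul,
      mul_inv_cancel₀ hu0, abs_one, ENNReal.ofReal_one, one_smul]
  rw [h1, lintegral_smul_measure, lintegral_map (by fun_prop) (measurable_const_mul u)]
  have heq : ∀ t : ℝ, ENNReal.ofReal (|u - u * t| ^ β * |u * t| ^ c)
      = ENNReal.ofReal (|u| ^ (c + β)) * ENNReal.ofReal (|t| ^ c * |1 - t| ^ β) := by
    intro t
    rw [← ENNReal.ofReal_mul (by positivity)]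
    congr 1
    have : u - u * t = u * (1 - t) := by ring
    rw [this, abs_mul, abs_mul, mul_rpow (abs_nonneg _) (abs_nonneg _),
      mul_rpow (abs_nonneg _) (abs_nonneg _), rpow_add habs]
    ring
  simp_rw [heq]
  rw [lintegral_const_mul _ (by fun_prop), smul_eq_mul, ← mul_assoc,
    ← ENNReal.ofReal_mul (abs_nonneg _), mul_comm (ENNReal.ofReal _)]
  congr 2
  rw [show c + β + 1 = 1 + (c + β) by ring, rpow_add habs, rpow_add habs, Real.rpow_one, rpow_add habs]

lemma key2 (f : ℝ → ℝ≥0∞) (hf : Measurable f) (β c : ℝ) :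
    ∫⁻ s : ℝ, (∫⁻ y : ℝ, f (y + s) * ENNReal.ofReal (|y| ^ β)) * ENNReal.ofReal (|s| ^ c)
      = (∫⁻ t : ℝ, ENNReal.ofReal (|t| ^ c * |1 - t| ^ β))
        * ∫⁻ u : ℝ, f u * ENNReal.ofReal (|u| ^ (c + β + 1)) := by
  have hG : Measurable fun p : ℝ × ℝ => f p.2 * ENNReal.ofReal (|p.2 - p.1| ^ β * |p.1| ^ c) := by
    fun_prop
  calc
    ∫⁻ s : ℝ, (∫⁻ y : ℝ, f (y + s) * ENNReal.ofReal (|y| ^ β)) * ENNReal.ofReal (|s| ^ c)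
        = ∫⁻ s : ℝ, ∫⁻ u : ℝ, f u * ENNReal.ofReal (|u - s| ^ β * |s| ^ c) := by
      refine lintegral_congr fun s => ?_
      rw [← lintegral_mul_const' _ _ ENNReal.ofReal_ne_top,
        ← lintegral_add_right_eq_self
          (fun u => f u * ENNReal.ofReal (|u - s| ^ β * |s| ^ c)) s]
      refine lintegral_congr fun y => ?_
      simp only [add_sub_cancel_right]
      rw [ENNReal.ofReal_mul (by positivity), mul_assoc]
    _ = ∫⁻ u : ℝ, ∫⁻ s : ℝ, f u * ENNReal.ofReal (|u - s| ^ β * |s| ^ c) :=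
      lintegral_lintegral_swap (Measurable.aemeasurable (by fun_prop))
    _ = ∫⁻ u : ℝ, (∫⁻ t : ℝ, ENNReal.ofReal (|t| ^ c * |1 - t| ^ β))
          * (f u * ENNReal.ofReal (|u| ^ (c + β + 1))) := by
      refine lintegral_congr_ae ?_
      filter_upwards [compl_mem_ae_iff.2 (volume_singleton (a := (0:ℝ)))] with u hu
      have hu0 : u ≠ 0 := hu
      rw [lintegral_const_mul _ (by fun_prop), scale_int u β c hu0]
      ring
    _ = (∫⁻ t : ℝ, ENNReal.ofReal (|t| ^ c * |1 - t| ^ β))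
        * ∫⁻ u : ℝ, f u * ENNReal.ofReal (|u| ^ (c + β + 1)) :=
      lintegral_const_mul _ (by fun_prop)


lemma sum_shift (q : ℕ) (β : ℕ → ℝ) (a : ℕ) :
    ∑ j ∈ Finset.Icc a q, β (j + 1) = ∑ j ∈ Finset.Icc (a + 1) (q + 1), β j := by
  rw [← Finset.map_add_right_Icc a q 1, Finset.sum_map]
  rfl

theorem aux (q : ℕ) (hq : 1 ≤ q) : ∀ (f : ℝ → ℝ≥0∞), Measurable f → ∀ (β : ℕ → ℝ),
    ∫⁻ y : Fin q → ℝ, f (∑ i, y i) * ∏ i : Fin q, ENNReal.ofReal (|y i| ^ β (i.1 + 1))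
      = (∏ i ∈ Finset.Icc 2 q, ∫⁻ t : ℝ,
            ENNReal.ofReal (|t| ^ ((q : ℝ) - (i : ℝ) + ∑ j ∈ Finset.Icc i q, β j)
              * |1 - t| ^ β (i - 1)))
        * ∫⁻ s : ℝ, f s * ENNReal.ofReal (|s| ^ ((q : ℝ) - 1 + ∑ i ∈ Finset.Icc 1 q, β i)) := by
  induction q, hq using Nat.le_induction with
  | base =>
    intro f hf β
    have h1 : Finset.Icc 2 1 = (∅ : Finset ℕ) := rfl
    rw [h1, Finset.prod_empty, one_mul, Finset.Icc_self, Finset.sum_singleton]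
    have := (volume_preserving_funUnique (Fin 1) ℝ).lintegral_comp_emb
      (MeasurableEquiv.measurableEmbedding _)
      (fun s => f s * ENNReal.ofReal (|s| ^ ((1 : ℕ) - 1 + β 1 : ℝ)))
    rw [← this]
    refine lintegral_congr fun y => ?_
    simp [MeasurableEquiv.funUnique, Equiv.funUnique, Fin.sum_univ_one, Fin.prod_univ_one]
  | succ q hq IH =>
    intro f hf β
    set e := MeasurableEquiv.piFinSuccAbove (fun _ : Fin (q + 1) => ℝ) 0 with he
    have hmp : MeasurePreserving e := volume_preserving_piFinSuccAbove _ 0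
    set F : (Fin (q + 1) → ℝ) → ℝ≥0∞ := fun y =>
      f (∑ i, y i) * ∏ i : Fin (q + 1), ENNReal.ofReal (|y i| ^ β (i.1 + 1)) with hF
    have hFm : Measurable F := by
      apply Measurable.mul
      · exact hf.comp (Finset.measurable_sum _ fun i _ => measurable_pi_apply i)
      · exact Finset.measurable_prod _ fun i _ => by fun_prop
    set g : ℝ → ℝ≥0∞ := fun s => ∫⁻ x : ℝ, f (x + s) * ENNReal.ofReal (|x| ^ β 1) with hg
    have hgm : Measurable g := by
      apply Measurable.lintegral_prod_right'
        (f := fun p : ℝ × ℝ => f (p.2 + p.1) * ENNReal.ofReal (|p.2| ^ β 1))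
      fun_prop
    set β' : ℕ → ℝ := fun j => β (j + 1) with hβ'
    -- Step 1: reduce to iterated integral
    have step1 : ∫⁻ y : Fin (q + 1) → ℝ, F y
        = ∫⁻ z : Fin q → ℝ, g (∑ i, z i)
            * ∏ i : Fin q, ENNReal.ofReal (|z i| ^ β' (i.1 + 1)) := by
      rw [← (hmp.symm e).lintegral_comp_emb (MeasurableEquiv.measurableEmbedding _)]
      rw [MeasureTheory.Measure.volume_eq_prod, lintegral_prod_symm (fun a => F (e.symm a)) (Measurable.aemeasurable (by exact hFm.comp (e.symm.measurable)))]
      refine lintegral_congr fun z => ?_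
      have hps : ∀ p : ℝ × (Fin q → ℝ), e.symm p = Fin.cons p.1 p.2 := by
        intro p
        simp [he, MeasurableEquiv.piFinSuccAbove_symm_apply, Fin.insertNth_zero]
        rfl
      rw [hg]
      rw [← lintegral_mul_const' _ _
        (ENNReal.prod_ne_top (fun i _ => ENNReal.ofReal_ne_top))]
      refine lintegral_congr fun x => ?_
      rw [hps (x, z), hF]
      simp only [Fin.sum_cons, Fin.prod_univ_succ, Fin.cons_zero, Fin.cons_succ,
        Fin.val_succ, Fin.val_zero, hβ']
      ring
    -- Step 2: apply IH
    have step2 := IH g hgm β'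
    -- Step 3: apply key2
    set c : ℝ := (q : ℝ) - 1 + ∑ i ∈ Finset.Icc 1 q, β' i with hc
    have step3 := key2 f hf (β 1) c
    -- exponent identity
    have hexp : c + β 1 + 1 = ((q + 1 : ℕ) : ℝ) - 1 + ∑ i ∈ Finset.Icc 1 (q + 1), β i := by
      rw [hc, hβ']
      rw [sum_shift q β 1]
      rw [Finset.Icc_eq_cons_Ioc (by omega : 1 ≤ q + 1), Finset.sum_cons,
        ← Finset.Icc_add_one_left_eq_Ioc]
      push_cast
      ring
    -- Γ identity
    have hΓ : (∏ i ∈ Finset.Icc 2 (q + 1), ∫⁻ t : ℝ,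
            ENNReal.ofReal (|t| ^ (((q + 1 : ℕ) : ℝ) - (i : ℝ) + ∑ j ∈ Finset.Icc i (q + 1), β j)
              * |1 - t| ^ β (i - 1)))
        = (∫⁻ t : ℝ, ENNReal.ofReal (|t| ^ c * |1 - t| ^ β 1))
          * ∏ i ∈ Finset.Icc 2 q, ∫⁻ t : ℝ,
              ENNReal.ofReal (|t| ^ ((q : ℝ) - (i : ℝ) + ∑ j ∈ Finset.Icc i q, β' j)
                * |1 - t| ^ β' (i - 1)) := by
      rw [Finset.Icc_eq_cons_Ioc (by omega : 2 ≤ q + 1), Finset.prod_cons,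
        ← Finset.Icc_add_one_left_eq_Ioc]
      congr 1
      · congr 2 with t
        congr 2
        rw [hc, hβ', sum_shift q β 1]
        push_cast
        ring
      · rw [← Finset.map_add_right_Icc 2 q 1,
          Finset.prod_map]
        refine Finset.prod_congr rfl fun i hi => ?_
        have hi2 : 2 ≤ i := (Finset.mem_Icc.1 hi).1
        congr 1 with t
        congr 2
        · rw [hβ', sum_shift q β i]
          push_cast [addRightEmbedding_apply]
          ring
        · congr 1
          simp only [addRightEmbedding_apply, hβ']
          congr 1
          omega
    calc ∫⁻ y : Fin (q + 1) → ℝ, F y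
        = _ := step1
      _ = _ := step2
      _ = (∏ i ∈ Finset.Icc 2 q, ∫⁻ t : ℝ,
              ENNReal.ofReal (|t| ^ ((q : ℝ) - (i : ℝ) + ∑ j ∈ Finset.Icc i q, β' j)
                * |1 - t| ^ β' (i - 1)))
          * ((∫⁻ t : ℝ, ENNReal.ofReal (|t| ^ c * |1 - t| ^ β 1))
            * ∫⁻ u : ℝ, f u * ENNReal.ofReal (|u| ^ (c + β 1 + 1))) := by
          rw [← step3]
      _ = _ := by
        rw [hΓ, hexp]
        ring

theorem stmt4 (q : ℕ) (hq : 0 < q) (f : ℝ → ℝ≥0∞) (hf : Measurable f) (β : ℕ → ℝ) :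
    ∫⁻ y : Fin q → ℝ, f (∑ i, y i) * ∏ i : Fin q, ENNReal.ofReal (|y i| ^ β (i.1 + 1))
      = (∏ i ∈ Finset.Icc 2 q, ∫⁻ t : ℝ,
            ENNReal.ofReal (|t| ^ ((q : ℝ) - (i : ℝ) + ∑ j ∈ Finset.Icc i q, β j)
              * |1 - t| ^ β (i - 1)))
        * ∫⁻ s : ℝ, f s * ENNReal.ofReal (|s| ^ ((q : ℝ) - 1 + ∑ i ∈ Finset.Icc 1 q, β i)) := by
  exact aux q hq f hf β
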